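/- Let x_{B1} ∈ H₃ be the bi-separable Bell state given by x_{B1}(a,b,c) = 1/√2 if (a,b,c) ∈ {(0,0,0),(0,1,1)} and 0 otherwise, and let X_{B1} be the topological closure in H₃ of its SLOCC class {λ·(A₁⊗A₂⊗A₃)x_{B1} : A₁,A₂,A₃ ∈ SL(2,ℂ), λ ∈ ℂ, λ ≠ 0}. Then the set {(p₁(v), p₂(v), p₃(v)) : v ∈ X_{B1}, ‖v‖ = 1} ⊆ ℝ³ is equal to the line segment {(0, t, t) : t ∈ [0, 1/2]}. -/

import Mathlib

open scoped BigOperators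

/-- The three-qubit Hilbert space. -/
abbrev H3 := (Fin 2 × Fin 2 × Fin 2) → ℂ

/-- Squared Hermitian norm of a vector in `H3`. -/
noncomputable def normSq3 (v : H3) : ℝ := ∑ x : Fin 2 × Fin 2 × Fin 2, Complex.normSq (v x)

/-- First one-qubit reduced density matrix. -/
noncomputable def rho1 (v : H3) : Matrix (Fin 2) (Fin 2) ℂ :=
  Matrix.of fun a a' => ∑ b : Fin 2, ∑ c : Fin 2, v (a, b, c) * star (v (a', b, c))

/-- Second one-qubit reduced density matrix. -/
noncomputable def rho2 (v : H3) : Matrix (Fin 2) (Fin 2) ℂ :=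
  Matrix.of fun b b' => ∑ a : Fin 2, ∑ c : Fin 2, v (a, b, c) * star (v (a, b', c))

/-- Third one-qubit reduced density matrix. -/
noncomputable def rho3 (v : H3) : Matrix (Fin 2) (Fin 2) ℂ :=
  Matrix.of fun c c' => ∑ a : Fin 2, ∑ b : Fin 2, v (a, b, c) * star (v (a, b, c'))

/-- Minimal (real) eigenvalue of a 2×2 complex matrix. -/
noncomputable def minEig (ρ : Matrix (Fin 2) (Fin 2) ℂ) : ℝ :=
  sInf {t : ℝ | (t : ℂ) ∈ spectrum ℂ ρ}

noncomputable def p1 (v : H3) : ℝ := minEig (rho1 v)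
noncomputable def p2 (v : H3) : ℝ := minEig (rho2 v)
noncomputable def p3 (v : H3) : ℝ := minEig (rho3 v)

/-- The action of a triple of 2×2 matrices on `H3` by the tensor product. -/
noncomputable def tensor3 (A1 A2 A3 : Matrix (Fin 2) (Fin 2) ℂ) (v : H3) : H3 :=
  fun x => ∑ a' : Fin 2, ∑ b' : Fin 2, ∑ c' : Fin 2,
    A1 x.1 a' * A2 x.2.1 b' * A3 x.2.2 c' * v (a', b', c')

/-- Local unitary equivalence of three-qubit states. -/
def LUequiv (v w : H3) : Prop :=
  ∃ U1 U2 U3 : Matrix (Fin 2) (Fin 2) ℂ,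
    U1 ∈ Matrix.unitaryGroup (Fin 2) ℂ ∧ U2 ∈ Matrix.unitaryGroup (Fin 2) ℂ ∧
    U3 ∈ Matrix.unitaryGroup (Fin 2) ℂ ∧ w = tensor3 U1 U2 U3 v

/-- The three-qubit W state. -/
noncomputable def wState : H3 := fun x =>
  if (x.1 = 1 ∧ x.2.1 = 0 ∧ x.2.2 = 0) ∨ (x.1 = 0 ∧ x.2.1 = 1 ∧ x.2.2 = 0) ∨
      (x.1 = 0 ∧ x.2.1 = 0 ∧ x.2.2 = 1)
  then ((1 / Real.sqrt 3 : ℝ) : ℂ) else 0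

/-- The SLOCC class of the W state. -/
def WClass : Set H3 :=
  {v | ∃ (A1 A2 A3 : Matrix (Fin 2) (Fin 2) ℂ) (l : ℂ),
    A1.det = 1 ∧ A2.det = 1 ∧ A3.det = 1 ∧ l ≠ 0 ∧ v = l • tensor3 A1 A2 A3 wState}

/-- The bi-separable Bell state `x_{B1}`. -/
noncomputable def xB1 : H3 := fun x =>
  if x = ((0 : Fin 2), (0 : Fin 2), (0 : Fin 2)) ∨ x = ((0 : Fin 2), (1 : Fin 2), (1 : Fin 2))
  then ((1 / Real.sqrt 2 : ℝ) : ℂ) else 0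

/-- The SLOCC class of `x_{B1}`. -/
def B1Class : Set H3 :=
  {v | ∃ (A1 A2 A3 : Matrix (Fin 2) (Fin 2) ℂ) (l : ℂ),
    A1.det = 1 ∧ A2.det = 1 ∧ A3.det = 1 ∧ l ≠ 0 ∧ v = l • tensor3 A1 A2 A3 xB1}

set_option maxHeartbeats 1000000

section Aux

lemma minEig_formula (ρ : Matrix (Fin 2) (Fin 2) ℂ) (d : ℝ)
    (htr : ρ 0 0 + ρ 1 1 = 1) (hdet : ρ.det = (d : ℂ)) (hdisc : 0 ≤ 1 - 4 * d) :
    minEig ρ = (1 - Real.sqrt (1 - 4 * d)) / 2 := by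
  set s : ℝ := Real.sqrt (1 - 4 * d) with hs
  have hs2 : s ^ 2 = 1 - 4 * d := Real.sq_sqrt hdisc
  have hsnn : 0 ≤ s := Real.sqrt_nonneg _
  have hdet2 : ρ 0 0 * ρ 1 1 - ρ 0 1 * ρ 1 0 = (d : ℂ) := by
    rw [← Matrix.det_fin_two]; exact hdet
  have hspec : ∀ z : ℂ, z ∈ spectrum ℂ ρ ↔ (z - ((1 - s) / 2 : ℝ)) * (z - ((1 + s) / 2 : ℝ)) = 0 := by
    intro z
    rw [spectrum.mem_iff, Matrix.isUnit_iff_isUnit_det, isUnit_iff_ne_zero, not_not]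
    have hd : (algebraMap ℂ (Matrix (Fin 2) (Fin 2) ℂ) z - ρ).det
        = (z - ρ 0 0) * (z - ρ 1 1) - (- ρ 0 1) * (- ρ 1 0) := by
      rw [Matrix.det_fin_two]
      simp [Matrix.algebraMap_matrix_apply]
    rw [hd]
    constructor
    · intro hz
      have : (z - ((1 - s) / 2 : ℝ)) * (z - ((1 + s) / 2 : ℝ))
          = (z - ρ 0 0) * (z - ρ 1 1) - (- ρ 0 1) * (- ρ 1 0) := by
        have hs2' : ((s : ℂ)) ^ 2 = 1 - 4 * (d:ℂ) := by
          rw [← Complex.ofReal_pow, hs2]; push_cast; ring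
        push_cast
        linear_combination (-(1:ℂ)) * hdet2 + z * htr - (1/4 : ℂ) * hs2'
      rw [this]; exact hz
    · intro hz
      have : (z - ρ 0 0) * (z - ρ 1 1) - (- ρ 0 1) * (- ρ 1 0)
          = (z - ((1 - s) / 2 : ℝ)) * (z - ((1 + s) / 2 : ℝ)) := by
        have hs2' : ((s : ℂ)) ^ 2 = 1 - 4 * (d:ℂ) := by
          rw [← Complex.ofReal_pow, hs2]; push_cast; ring
        push_cast
        linear_combination (1:ℂ) * hdet2 - z * htr + (1/4 : ℂ) * hs2'
      rw [this]; exact hz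
  have hset : {t : ℝ | (t : ℂ) ∈ spectrum ℂ ρ} = {(1 - s) / 2, (1 + s) / 2} := by
    ext t
    simp only [Set.mem_setOf_eq, hspec, mul_eq_zero, sub_eq_zero, Set.mem_insert_iff,
      Set.mem_singleton_iff, Complex.ofReal_inj]
  rw [minEig, hset, csInf_pair]
  rw [min_eq_left (by linarith)]

lemma rank1_of_closure {v : H3} (hv : v ∈ closure B1Class) :
    ∀ x y : Fin 2 × Fin 2, v (0, x.1, x.2) * v (1, y.1, y.2) = v (1, x.1, x.2) * v (0, y.1, y.2) := by
  have hC : IsClosed {w : H3 | ∀ x y : Fin 2 × Fin 2,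
      w (0, x.1, x.2) * w (1, y.1, y.2) = w (1, x.1, x.2) * w (0, y.1, y.2)} := by
    simp only [Set.setOf_forall]
    refine isClosed_iInter fun x => isClosed_iInter fun y => isClosed_eq (by fun_prop) (by fun_prop)
  refine closure_minimal ?_ hC hv
  rintro w ⟨A1, A2, A3, l, _, _, _, _, rfl⟩ x y
  simp only [Pi.smul_apply, smul_eq_mul, tensor3, xB1, Fin.sum_univ_two]
  norm_num [Prod.ext_iff]
  ring

lemma decomp_of_closure {v : H3} (hv : v ∈ closure B1Class) :
    ∃ (f : Fin 2 → ℂ) (g : Fin 2 × Fin 2 → ℂ), ∀ a b c, v (a, b, c) = f a * g (b, c) := by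
  have h := rank1_of_closure hv
  by_cases hz : ∀ x : Fin 2 × Fin 2, v (0, x.1, x.2) = 0
  · refine ⟨fun a => if a = 1 then 1 else 0, fun x => v (1, x.1, x.2), ?_⟩
    intro a b c
    fin_cases a
    · simpa using hz (b, c)
    · simp
  · push_neg at hz
    obtain ⟨x0, hx0⟩ := hz
    refine ⟨fun a => v (a, x0.1, x0.2), fun x => v (0, x.1, x.2) / v (0, x0.1, x0.2), ?_⟩
    intro a b c
    have key : v (0, x0.1, x0.2) * v (a, b, c) = v (a, x0.1, x0.2) * v (0, b, c) := by
      fin_cases a <;> simp only [Fin.zero_eta, Fin.mk_one, Fin.isValue]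
      simpa using h x0 (b, c)
    field_simp
    linear_combination key

/-- General Hermitian 2×2 Gram-type matrix. -/
noncomputable def hermM (f : Fin 2 → Fin 2 → Fin 2 → ℂ) : Matrix (Fin 2) (Fin 2) ℂ :=
  Matrix.of fun i j => ∑ x : Fin 2, ∑ y : Fin 2, f i x y * star (f j x y)

lemma hermM_diag (f : Fin 2 → Fin 2 → Fin 2 → ℂ) (i : Fin 2) :
    hermM f i i = ((∑ x : Fin 2, ∑ y : Fin 2, Complex.normSq (f i x y) : ℝ) : ℂ) := by
  simp [hermM, Complex.mul_conj]

lemma hermM_det (f : Fin 2 → Fin 2 → Fin 2 → ℂ) :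
    ∃ d : ℝ, 0 ≤ d ∧ (hermM f).det = (d : ℝ) ∧
      d = (∑ x : Fin 2, ∑ y : Fin 2, Complex.normSq (f 0 x y)) *
          (∑ x : Fin 2, ∑ y : Fin 2, Complex.normSq (f 1 x y))
          - Complex.normSq (∑ x : Fin 2, ∑ y : Fin 2, f 0 x y * star (f 1 x y)) := by
  set A := ∑ x : Fin 2, ∑ y : Fin 2, Complex.normSq (f 0 x y) with hA
  set B := ∑ x : Fin 2, ∑ y : Fin 2, Complex.normSq (f 1 x y) with hB
  set Z := ∑ x : Fin 2, ∑ y : Fin 2, f 0 x y * star (f 1 x y) with hZ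
  have key : ((A * B - Complex.normSq Z : ℝ) : ℂ) =
      (((1:ℝ)/2) * ∑ x : Fin 2, ∑ y : Fin 2, ∑ x' : Fin 2, ∑ y' : Fin 2,
        Complex.normSq (f 0 x y * f 1 x' y' - f 0 x' y' * f 1 x y) : ℝ) := by
    push_cast [← Complex.mul_conj, hA, hB, hZ]
    simp only [Fin.sum_univ_two, map_add, map_sub, map_mul, Complex.star_def, Complex.conj_conj]
    ring
  have hd : A * B - Complex.normSq Z =
      ((1:ℝ)/2) * ∑ x : Fin 2, ∑ y : Fin 2, ∑ x' : Fin 2, ∑ y' : Fin 2,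
        Complex.normSq (f 0 x y * f 1 x' y' - f 0 x' y' * f 1 x y) :=
    Complex.ofReal_inj.mp key
  refine ⟨A * B - Complex.normSq Z, ?_, ?_, rfl⟩
  · rw [hd]
    refine mul_nonneg (by norm_num) ?_
    refine Finset.sum_nonneg fun _ _ => Finset.sum_nonneg fun _ _ => ?_
    refine Finset.sum_nonneg fun _ _ => Finset.sum_nonneg fun _ _ => Complex.normSq_nonneg _
  · rw [Matrix.det_fin_two]
    have h00 := hermM_diag f 0
    have h11 := hermM_diag f 1
    have h01 : hermM f 0 1 = Z := by simp [hermM, hZ]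
    have h10 : hermM f 1 0 = star Z := by
      simp only [hermM, Matrix.of_apply, hZ, star_sum, star_mul', star_star]
      exact Finset.sum_congr rfl fun _ _ => Finset.sum_congr rfl fun _ _ => mul_comm _ _
    rw [h00, h11, h01, h10, ← hA, ← hB, Complex.star_def, Complex.mul_conj]
    push_cast
    ring

lemma rho1_eq (v : H3) : rho1 v = hermM (fun i x y => v (i, x, y)) := rfl
lemma rho2_eq (v : H3) : rho2 v = hermM (fun i x y => v (x, i, y)) := rfl
lemma rho3_eq (v : H3) : rho3 v = hermM (fun i x y => v (x, y, i)) := rfl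

end Aux

lemma forward_dir {v : H3} (hv : v ∈ closure B1Class) (hn : normSq3 v = 1) :
    ∃ t : ℝ, 0 ≤ t ∧ t ≤ 1/2 ∧ p1 v = 0 ∧ p2 v = t ∧ p3 v = t := by
  obtain ⟨f, g, hfg⟩ := decomp_of_closure hv
  -- traces
  have hn' := hn
  simp only [normSq3, Fintype.sum_prod_type, Fin.sum_univ_two] at hn'
  have tr1 : rho1 v 0 0 + rho1 v 1 1 = 1 := by
    rw [rho1_eq, hermM_diag, hermM_diag, ← Complex.ofReal_add,
      show ((1:ℂ)) = ((1:ℝ):ℂ) by norm_num, Complex.ofReal_inj]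
    simp only [Fin.sum_univ_two]
    linarith
  have tr2 : rho2 v 0 0 + rho2 v 1 1 = 1 := by
    rw [rho2_eq, hermM_diag, hermM_diag, ← Complex.ofReal_add,
      show ((1:ℂ)) = ((1:ℝ):ℂ) by norm_num, Complex.ofReal_inj]
    simp only [Fin.sum_univ_two]
    linarith
  have tr3 : rho3 v 0 0 + rho3 v 1 1 = 1 := by
    rw [rho3_eq, hermM_diag, hermM_diag, ← Complex.ofReal_add,
      show ((1:ℂ)) = ((1:ℝ):ℂ) by norm_num, Complex.ofReal_inj]
    simp only [Fin.sum_univ_two]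
    linarith
  -- determinant facts
  have hdet1 : (rho1 v).det = ((0:ℝ) : ℂ) := by
    simp only [rho1, Matrix.det_fin_two, Matrix.of_apply, hfg, Fin.sum_univ_two, star_mul']
    push_cast
    ring
  have hdet23 : (rho2 v).det = (rho3 v).det := by
    simp only [rho2, rho3, Matrix.det_fin_two, Matrix.of_apply, hfg, Fin.sum_univ_two, star_mul']
    ring
  obtain ⟨d2, hd2nn, hdet2, hd2eq⟩ := hermM_det (fun i x y => v (x, i, y))
  obtain ⟨d3, hd3nn, hdet3, hd3eq⟩ := hermM_det (fun i x y => v (x, y, i))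
  rw [← rho2_eq] at hdet2
  rw [← rho3_eq] at hdet3
  have hd23 : d2 = d3 := by
    have : ((d2:ℝ):ℂ) = ((d3:ℝ):ℂ) := by rw [← hdet2, ← hdet3, hdet23]
    exact_mod_cast this
  -- discriminant bound for rho2
  have hA2 : rho2 v 0 0 = ((∑ x : Fin 2, ∑ y : Fin 2, Complex.normSq (v (x, 0, y)) : ℝ) : ℂ) := by
    rw [rho2_eq]; exact hermM_diag _ 0
  have hB2 : rho2 v 1 1 = ((∑ x : Fin 2, ∑ y : Fin 2, Complex.normSq (v (x, 1, y)) : ℝ) : ℂ) := by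
    rw [rho2_eq]; exact hermM_diag _ 1
  have trAB : (∑ x : Fin 2, ∑ y : Fin 2, Complex.normSq (v (x, 0, y)))
      + (∑ x : Fin 2, ∑ y : Fin 2, Complex.normSq (v (x, 1, y))) = 1 := by
    have := tr2
    rw [hA2, hB2, ← Complex.ofReal_add, show ((1:ℂ)) = ((1:ℝ):ℂ) by norm_num,
      Complex.ofReal_inj] at this
    exact this
  have hdisc2 : 0 ≤ 1 - 4 * d2 := by
    rw [hd2eq]
    nlinarith [Complex.normSq_nonneg (∑ x : Fin 2, ∑ y : Fin 2, v (x, 0, y) * star (v (x, 1, y))),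
      sq_nonneg ((∑ x : Fin 2, ∑ y : Fin 2, Complex.normSq (v (x, 0, y)))
        - (∑ x : Fin 2, ∑ y : Fin 2, Complex.normSq (v (x, 1, y)))), trAB]
  -- eigenvalue computations
  have hp1 : p1 v = 0 := by
    rw [p1, minEig_formula (rho1 v) 0 tr1 hdet1 (by norm_num)]
    norm_num
  have hp2 : p2 v = (1 - Real.sqrt (1 - 4 * d2)) / 2 :=
    minEig_formula (rho2 v) d2 tr2 hdet2 hdisc2
  have hp3 : p3 v = (1 - Real.sqrt (1 - 4 * d2)) / 2 := by
    rw [← hd23] at hdet3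
    exact minEig_formula (rho3 v) d2 tr3 hdet3 hdisc2
  refine ⟨(1 - Real.sqrt (1 - 4 * d2)) / 2, ?_, ?_, hp1, hp2, hp3⟩
  · have h1 : Real.sqrt (1 - 4 * d2) ≤ 1 := Real.sqrt_le_one.mpr (by linarith)
    linarith
  · have := Real.sqrt_nonneg (1 - 4 * d2)
    linarith

lemma mem_B1Class_diag (c1 c2 : ℝ) (h1 : 0 < c1) (h2 : 0 < c2) :
    (fun x => if x = ((0 : Fin 2), (0 : Fin 2), (0 : Fin 2)) then (c1 : ℂ)
      else if x = ((0 : Fin 2), (1 : Fin 2), (1 : Fin 2)) then (c2 : ℂ) else 0 : H3) ∈ B1Class := by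
  set s1 := Real.sqrt c1 with hs1
  set s2 := Real.sqrt c2 with hs2
  have hs1p : 0 < s1 := Real.sqrt_pos.mpr h1
  have hs2p : 0 < s2 := Real.sqrt_pos.mpr h2
  have hs1sq : s1 * s1 = c1 := Real.mul_self_sqrt h1.le
  have hs2sq : s2 * s2 = c2 := Real.mul_self_sqrt h2.le
  have hr2 : Real.sqrt 2 * Real.sqrt 2 = 2 := Real.mul_self_sqrt (by norm_num)
  have hr2p : 0 < Real.sqrt 2 := Real.sqrt_pos.mpr (by norm_num)
  refine ⟨1, Matrix.of ![![((s1 / s2 : ℝ) : ℂ), 0], ![0, ((s2 / s1 : ℝ) : ℂ)]], 1,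
    ((Real.sqrt 2 * s1 * s2 : ℝ) : ℂ), Matrix.det_one, ?_, Matrix.det_one, ?_, ?_⟩
  · have hne1 : ((s1:ℝ):ℂ) ≠ 0 := Complex.ofReal_ne_zero.mpr (ne_of_gt hs1p)
    have hne2 : ((s2:ℝ):ℂ) ≠ 0 := Complex.ofReal_ne_zero.mpr (ne_of_gt hs2p)
    rw [Matrix.det_fin_two]
    simp only [Matrix.of_apply, Matrix.cons_val', Matrix.cons_val_zero, Matrix.cons_val_one,
      Matrix.head_cons, Matrix.empty_val', Matrix.cons_val_fin_one, Matrix.head_fin_const]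
    push_cast
    field_simp
    norm_num
  · simp only [ne_eq, Complex.ofReal_eq_zero]
    positivity
  · funext x
    obtain ⟨a, b, c⟩ := x
    have hxB : ∀ y : Fin 2 × Fin 2 × Fin 2, xB1 y =
        if y = ((0 : Fin 2), (0 : Fin 2), (0 : Fin 2)) ∨ y = ((0 : Fin 2), (1 : Fin 2), (1 : Fin 2))
        then ((1 / Real.sqrt 2 : ℝ) : ℂ) else 0 := fun y => rfl
    fin_cases a <;> fin_cases b <;> fin_cases c <;>
      simp only [tensor3, Fin.sum_univ_two, hxB, Matrix.one_apply, Matrix.of_apply,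
        Matrix.cons_val', Matrix.cons_val_zero, Matrix.cons_val_one, Matrix.head_cons,
        Matrix.empty_val', Matrix.cons_val_fin_one, Matrix.head_fin_const, Pi.smul_apply,
        smul_eq_mul] <;>
      norm_num [Prod.ext_iff] <;>
      (try norm_cast) <;> (try field_simp) <;>
      first
        | linear_combination (s2 * Real.sqrt 2) * hs1sq
        | linear_combination (s1 * Real.sqrt 2) * hs2sq
        | linear_combination (-(s2 * Real.sqrt 2)) * hs1sq
        | linear_combination (-(s1 * Real.sqrt 2)) * hs2sq
        | linear_combination (-1 : ℝ) * hs1sq + (s1 * Real.sqrt 2) * hs2sq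
        | linear_combination (s1 * Real.sqrt 2 - 1) * hs2sq
        | linear_combination (-1 : ℝ) * hs1sq
        | linear_combination (-1 : ℝ) * hs2sq

lemma backward_dir (t : ℝ) (ht0 : 0 ≤ t) (ht2 : t ≤ 1/2) :
    ∃ v : H3, v ∈ closure B1Class ∧ normSq3 v = 1 ∧ p1 v = 0 ∧ p2 v = t ∧ p3 v = t := by
  set α := Real.sqrt (1 - t) with hα
  set β := Real.sqrt t with hβ
  have hαsq : α * α = 1 - t := Real.mul_self_sqrt (by linarith)
  have hβsq : β * β = t := Real.mul_self_sqrt ht0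
  have hαp : 0 < α := Real.sqrt_pos.mpr (by linarith)
  set v : H3 := fun x => if x = ((0 : Fin 2), (0 : Fin 2), (0 : Fin 2)) then (α : ℂ)
      else if x = ((0 : Fin 2), (1 : Fin 2), (1 : Fin 2)) then (β : ℂ) else 0 with hvdef
  have hmem : v ∈ closure B1Class := by
    rcases eq_or_lt_of_le ht0 with h0 | h0
    · -- t = 0 : v is a limit of members of B1Class
      have hβ0 : β = 0 := by rw [hβ, ← h0, Real.sqrt_zero]
      have hseq : ∀ n : ℕ, (fun x => if x = ((0 : Fin 2), (0 : Fin 2), (0 : Fin 2)) then ((α : ℝ) : ℂ)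
          else if x = ((0 : Fin 2), (1 : Fin 2), (1 : Fin 2)) then ((1 / (n + 1) : ℝ) : ℂ) else 0 : H3)
          ∈ B1Class := fun n =>
        mem_B1Class_diag α (1 / (n + 1)) hαp (by positivity)
      have htend : Filter.Tendsto (fun n : ℕ =>
          (fun x => if x = ((0 : Fin 2), (0 : Fin 2), (0 : Fin 2)) then ((α : ℝ) : ℂ)
            else if x = ((0 : Fin 2), (1 : Fin 2), (1 : Fin 2)) then ((1 / (n + 1) : ℝ) : ℂ) else 0 : H3))
          Filter.atTop (nhds v) := by
        rw [tendsto_pi_nhds]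
        intro x
        by_cases hx0 : x = ((0 : Fin 2), (0 : Fin 2), (0 : Fin 2))
        · simp only [hx0, if_pos rfl, hvdef]
          exact tendsto_const_nhds
        · by_cases hx1 : x = ((0 : Fin 2), (1 : Fin 2), (1 : Fin 2))
          · simp only [hvdef, hx1, hx0, if_neg, if_pos rfl, reduceIte, hβ0, Complex.ofReal_zero]
            have : Filter.Tendsto (fun n : ℕ => ((1 / (n + 1) : ℝ) : ℂ)) Filter.atTop (nhds ((0:ℝ):ℂ)) := by
              refine Filter.Tendsto.comp (Complex.continuous_ofReal.tendsto _) ?_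
              exact tendsto_one_div_add_atTop_nhds_zero_nat
            simpa using this
          · simp only [hvdef, hx0, hx1, if_neg, reduceIte]
            exact tendsto_const_nhds
      exact mem_closure_of_tendsto htend (Filter.Eventually.of_forall hseq)
    · -- t > 0 : v itself is in B1Class
      have hβp : 0 < β := Real.sqrt_pos.mpr h0
      exact subset_closure (mem_B1Class_diag α β hαp hβp)
  have hval : ∀ x : Fin 2 × Fin 2 × Fin 2, v x = if x = ((0 : Fin 2), (0 : Fin 2), (0 : Fin 2)) then (α : ℂ)
      else if x = ((0 : Fin 2), (1 : Fin 2), (1 : Fin 2)) then (β : ℂ) else 0 := fun _ => rfl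
  have hnorm : normSq3 v = 1 := by
    simp only [normSq3, Fintype.sum_prod_type, Fin.sum_univ_two, hval]
    norm_num [Prod.ext_iff, Complex.normSq_ofReal]
    nlinarith [hαsq, hβsq]
  -- rho1
  have tr1 : rho1 v 0 0 + rho1 v 1 1 = 1 := by
    simp only [rho1, Matrix.of_apply, Fin.sum_univ_two, hval]
    norm_num [Prod.ext_iff]
    norm_cast
    nlinarith [hαsq, hβsq]
  have hdet1 : (rho1 v).det = ((0:ℝ) : ℂ) := by
    rw [Matrix.det_fin_two]
    simp only [rho1, Matrix.of_apply, Fin.sum_univ_two, hval]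
    norm_num [Prod.ext_iff]
  have hp1 : p1 v = 0 := by
    rw [p1, minEig_formula (rho1 v) 0 tr1 hdet1 (by norm_num)]
    norm_num
  -- rho2 and rho3
  have tr2 : rho2 v 0 0 + rho2 v 1 1 = 1 := by
    simp only [rho2, Matrix.of_apply, Fin.sum_univ_two, hval]
    norm_num [Prod.ext_iff]
    norm_cast
    nlinarith [hαsq, hβsq]
  have tr3 : rho3 v 0 0 + rho3 v 1 1 = 1 := by
    simp only [rho3, Matrix.of_apply, Fin.sum_univ_two, hval]
    norm_num [Prod.ext_iff]
    norm_cast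
    nlinarith [hαsq, hβsq]
  have hdet2 : (rho2 v).det = (((1 - t) * t : ℝ) : ℂ) := by
    rw [Matrix.det_fin_two]
    simp only [rho2, Matrix.of_apply, Fin.sum_univ_two, hval]
    norm_num [Prod.ext_iff, ← Complex.ofReal_mul]
    push_cast
    rw [← hαsq, ← hβsq]
    try ring
  have hdet3 : (rho3 v).det = (((1 - t) * t : ℝ) : ℂ) := by
    rw [Matrix.det_fin_two]
    simp only [rho3, Matrix.of_apply, Fin.sum_univ_two, hval]
    norm_num [Prod.ext_iff, ← Complex.ofReal_mul]
    push_cast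
    rw [← hαsq, ← hβsq]
    try ring
  have hdisc : 0 ≤ 1 - 4 * ((1 - t) * t) := by nlinarith [sq_nonneg (1 - 2*t)]
  have hsqrt : Real.sqrt (1 - 4 * ((1 - t) * t)) = 1 - 2 * t := by
    rw [show 1 - 4 * ((1 - t) * t) = (1 - 2*t)^2 by ring]
    exact Real.sqrt_sq (by linarith)
  have hp2 : p2 v = t := by
    rw [p2, minEig_formula (rho2 v) ((1 - t) * t) tr2 hdet2 hdisc, hsqrt]
    ring
  have hp3 : p3 v = t := by
    rw [p3, minEig_formula (rho3 v) ((1 - t) * t) tr3 hdet3 hdisc, hsqrt]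
    ring
  exact ⟨v, hmem, hnorm, hp1, hp2, hp3⟩

/-- the Kirwan polytope of the closure of the SLOCC class of the
bi-separable Bell state `x_{B1}` is the segment `{(0,t,t) : t ∈ [0,1/2]}`. -/
theorem kirwan_polytope_of_B1_closure :
    {q : ℝ × ℝ × ℝ | ∃ v : H3, v ∈ closure B1Class ∧ normSq3 v = 1 ∧
        q = (p1 v, p2 v, p3 v)} =
      {q : ℝ × ℝ × ℝ | ∃ t ∈ Set.Icc (0 : ℝ) (1 / 2), q = (0, t, t)} := by
  ext q
  simp only [Set.mem_setOf_eq]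
  constructor
  · rintro ⟨v, hv, hn, rfl⟩
    obtain ⟨t, ht0, ht2, hp1, hp2, hp3⟩ := forward_dir hv hn
    exact ⟨t, ⟨ht0, ht2⟩, by rw [hp1, hp2, hp3]⟩
  · rintro ⟨t, ⟨ht0, ht2⟩, rfl⟩
    obtain ⟨v, hmem, hnorm, hp1, hp2, hp3⟩ := backward_dir t ht0 ht2
    exact ⟨v, hmem, hnorm, by rw [hp1, hp2, hp3]⟩
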